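/- There exists a constant C > 0 (depending only on K) such that for all λ > 0, x > 0 and z > −1, the jump increment of the Black–Scholes delta satisfies | Φ(d(λ, x(1+z))) − Φ(d(λ, x)) | ≤ C x^{−1/2} λ^{−1/2} e^{−λ/8} ϖ₀(z), where ϖ₀(z) = 1 + (1+z)^{−1/2}·1_{{−1<z≤0}}. -/

import Mathlib

open MeasureTheory Set Real

/-- Standard normal density φ(a) = (2π)^{−1/2} e^{−a²/2}. -/
noncomputable def stdNormalPdf (a : ℝ) : ℝ :=
  (Real.sqrt (2 * Real.pi))⁻¹ * Real.exp (-(a ^ 2) / 2)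

/-- Standard normal distribution function Φ(a) = ∫_{−∞}^a φ(s) ds. -/
noncomputable def stdNormalCdf (a : ℝ) : ℝ :=
  ∫ s in Set.Iio a, stdNormalPdf s

/-- d(λ, x) = ln(x/K)/√λ + √λ/2. -/
noncomputable def bsD (K lam x : ℝ) : ℝ :=
  Real.log (x / K) / Real.sqrt lam + Real.sqrt lam / 2

/-- Black–Scholes call price with strike K, zero interest rate and total
remaining variance λ: Ĉ(λ, x) = x Φ(d(λ, x)) − K Φ(d(λ, x) − √λ). -/
noncomputable def bsPrice (K lam x : ℝ) : ℝ :=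
  x * stdNormalCdf (bsD K lam x) - K * stdNormalCdf (bsD K lam x - Real.sqrt lam)

/-- ϖ₀(z) = 1 + (1+z)^{−1/2}·1_{−1<z≤0}. -/
noncomputable def varpi0 (z : ℝ) : ℝ :=
  1 + (if -1 < z ∧ z ≤ 0 then (1 + z) ^ (-(1 / 2) : ℝ) else 0)

lemma stdNormalPdf_nonneg (a : ℝ) : 0 ≤ stdNormalPdf a := by
  unfold stdNormalPdf; positivity

lemma stdNormalPdf_integrable : Integrable stdNormalPdf := by
  have h : stdNormalPdf = fun a => (Real.sqrt (2 * Real.pi))⁻¹ * Real.exp (-(1/2) * a ^ 2) := by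
    funext a; unfold stdNormalPdf; congr 1; ring_nf
  rw [h]
  exact (integrable_exp_neg_mul_sq (by norm_num)).const_mul _

lemma cdf_sub {a b : ℝ} (hab : a ≤ b) :
    stdNormalCdf b - stdNormalCdf a = ∫ s in Set.Ioc a b, stdNormalPdf s := by
  unfold stdNormalCdf
  rw [← integral_Iic_eq_integral_Iio, ← integral_Iic_eq_integral_Iio,
    intervalIntegral.integral_Iic_sub_Iic stdNormalPdf_integrable.integrableOn
      stdNormalPdf_integrable.integrableOn,
    intervalIntegral.integral_of_le hab]

lemma tail_bound {K lam a : ℝ} (hK : 0 < K) (hlam : 0 < lam) (ha : 0 < a) :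
    ∫ s in Set.Ioi (bsD K lam a), stdNormalPdf s
      ≤ Real.sqrt K * a ^ (-(1/2) : ℝ) * lam ^ (-(1/2) : ℝ) * Real.exp (-lam/8) := by
  set t : ℝ := Real.sqrt lam / 2 with ht_def
  have hsl : 0 < Real.sqrt lam := Real.sqrt_pos.mpr hlam
  have ht : 0 < t := by positivity
  set c : ℝ := bsD K lam a with hc_def
  have hsq : Real.sqrt lam ^ 2 = lam := Real.sq_sqrt hlam.le
  -- pointwise bound
  have hpt : ∀ s : ℝ, stdNormalPdf s
      ≤ (Real.sqrt (2 * Real.pi))⁻¹ * (Real.exp (lam/8) * Real.exp (-(t * s))) := by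
    intro s
    unfold stdNormalPdf
    rw [← Real.exp_add]
    have h1 : -(s ^ 2) / 2 ≤ lam / 8 + -(t * s) := by
      have := sq_nonneg (s - Real.sqrt lam / 2)
      nlinarith
    have := Real.exp_le_exp.mpr h1
    nlinarith [Real.sqrt_nonneg (2 * Real.pi), Real.exp_pos (-(s^2)/2),
      inv_nonneg.mpr (Real.sqrt_nonneg (2 * Real.pi))]
  -- integrability of the exponential bound
  have hexp_int : IntegrableOn (fun s => Real.exp (-(t * s))) (Set.Ioi c) := by
    have := exp_neg_integrableOn_Ioi c ht
    simpa [neg_mul] using this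
  have hbound_int : IntegrableOn
      (fun s => (Real.sqrt (2 * Real.pi))⁻¹ * (Real.exp (lam/8) * Real.exp (-(t * s))))
      (Set.Ioi c) := by
    exact ((hexp_int.const_mul _).const_mul _)
  -- compare integrals
  have hstep1 : ∫ s in Set.Ioi c, stdNormalPdf s
      ≤ ∫ s in Set.Ioi c, (Real.sqrt (2 * Real.pi))⁻¹ * (Real.exp (lam/8) * Real.exp (-(t * s))) := by
    refine setIntegral_mono_on stdNormalPdf_integrable.integrableOn hbound_int
      measurableSet_Ioi (fun s _ => hpt s)
  -- compute the exponential integral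
  have hexp_eval : ∫ s in Set.Ioi c, Real.exp (-(t * s)) = t⁻¹ * Real.exp (-(t * c)) := by
    have h := integral_comp_mul_left_Ioi (fun x => Real.exp (-x)) c ht
    simp only [smul_eq_mul] at h
    rw [h, integral_exp_neg_Ioi]
  have hstep2 : ∫ s in Set.Ioi c, (Real.sqrt (2 * Real.pi))⁻¹ * (Real.exp (lam/8) * Real.exp (-(t * s)))
      = (Real.sqrt (2 * Real.pi))⁻¹ * (Real.exp (lam/8) * (t⁻¹ * Real.exp (-(t * c)))) := by
    rw [integral_const_mul, integral_const_mul, hexp_eval]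
  -- evaluate t * c
  have htc : t * c = Real.log (a / K) / 2 + lam / 4 := by
    have hmul : Real.sqrt lam * Real.sqrt lam = lam := Real.mul_self_sqrt hlam.le
    rw [ht_def, hc_def]; unfold bsD
    field_simp
    ring_nf
    rw [hsq]
  have hexp_tc : Real.exp (-(t * c)) = a ^ (-(1/2) : ℝ) * Real.sqrt K * Real.exp (-lam/4) := by
    rw [htc, neg_add, Real.exp_add]
    congr 1
    · rw [show -(Real.log (a / K) / 2) = Real.log (a / K) * (-(1/2)) by ring,
        ← Real.rpow_def_of_pos (by positivity : (0:ℝ) < a / K),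
        Real.div_rpow ha.le hK.le, Real.rpow_neg hK.le, Real.rpow_neg ha.le,
        Real.sqrt_eq_rpow]
      field_simp
    · ring_nf
  have htinv : t⁻¹ = 2 * lam ^ (-(1/2) : ℝ) := by
    rw [ht_def, Real.rpow_neg hlam.le, ← Real.sqrt_eq_rpow]
    field_simp
  have hfinal : (Real.sqrt (2 * Real.pi))⁻¹ * (Real.exp (lam/8) * (t⁻¹ * Real.exp (-(t * c))))
      = (2 * (Real.sqrt (2 * Real.pi))⁻¹) *
        (Real.sqrt K * a ^ (-(1/2) : ℝ) * lam ^ (-(1/2) : ℝ) * Real.exp (-lam/8)) := by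
    rw [hexp_tc, htinv,
      show Real.exp (-lam/8) = Real.exp (lam/8) * Real.exp (-lam/4) by
        rw [← Real.exp_add]; ring_nf]
    ring
  have hc1 : 2 * (Real.sqrt (2 * Real.pi))⁻¹ ≤ 1 := by
    have hpos : 0 < Real.sqrt (2 * Real.pi) := Real.sqrt_pos.mpr (by positivity)
    have h2 : (2:ℝ) ≤ Real.sqrt (2 * Real.pi) := by
      have h4 := Real.sqrt_le_sqrt (show (4:ℝ) ≤ 2 * Real.pi by nlinarith [Real.pi_gt_three])
      rwa [show Real.sqrt 4 = 2 by
        rw [show (4:ℝ) = 2 ^ 2 by norm_num, Real.sqrt_sq (by norm_num : (0:ℝ) ≤ 2)]] at h4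
    have hcancel : Real.sqrt (2 * Real.pi) * (Real.sqrt (2 * Real.pi))⁻¹ = 1 :=
      mul_inv_cancel₀ hpos.ne'
    nlinarith [inv_nonneg.mpr hpos.le]
  calc ∫ s in Set.Ioi c, stdNormalPdf s
      ≤ (Real.sqrt (2 * Real.pi))⁻¹ * (Real.exp (lam/8) * (t⁻¹ * Real.exp (-(t * c)))) := by
        rw [← hstep2]; exact hstep1
    _ = (2 * (Real.sqrt (2 * Real.pi))⁻¹) *
        (Real.sqrt K * a ^ (-(1/2) : ℝ) * lam ^ (-(1/2) : ℝ) * Real.exp (-lam/8)) := hfinal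
    _ ≤ 1 * (Real.sqrt K * a ^ (-(1/2) : ℝ) * lam ^ (-(1/2) : ℝ) * Real.exp (-lam/8)) := by
        apply mul_le_mul_of_nonneg_right hc1
        positivity
    _ = Real.sqrt K * a ^ (-(1/2) : ℝ) * lam ^ (-(1/2) : ℝ) * Real.exp (-lam/8) := one_mul _

lemma bsD_mono {K lam : ℝ} (hK : 0 < K) (hlam : 0 < lam) {x1 x2 : ℝ} (h1 : 0 < x1)
    (h : x1 ≤ x2) : bsD K lam x1 ≤ bsD K lam x2 := by
  unfold bsD
  have hsl : 0 < Real.sqrt lam := Real.sqrt_pos.mpr hlam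
  have hlog : Real.log (x1 / K) ≤ Real.log (x2 / K) := by
    apply Real.log_le_log (by positivity)
    gcongr
  gcongr

lemma cdf_diff_nonneg {a b : ℝ} (hab : a ≤ b) : 0 ≤ stdNormalCdf b - stdNormalCdf a := by
  rw [cdf_sub hab]
  exact setIntegral_nonneg measurableSet_Ioc fun s _ => stdNormalPdf_nonneg s

lemma one_le_varpi0 {z : ℝ} (hz : -1 < z) : 1 ≤ varpi0 z := by
  unfold varpi0
  split_ifs with h
  · have := Real.rpow_nonneg (show (0:ℝ) ≤ 1 + z by linarith) (-(1/2) : ℝ)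
    linarith
  · norm_num

/- STATEMENT 17: There exists C > 0 (depending only on K) such that for all
   λ > 0, x > 0 and z > −1, the jump increment of the Black–Scholes delta
   Φ(d(λ,·)) satisfies
   |Φ(d(λ, x(1+z))) − Φ(d(λ,x))| ≤ C x^{−1/2} λ^{−1/2} e^{−λ/8} ϖ₀(z). -/
theorem bs_delta_jump_bound (K : ℝ) (hK : 0 < K) :
    ∃ C : ℝ, 0 < C ∧ ∀ lam x z : ℝ, 0 < lam → 0 < x → -1 < z →
      |stdNormalCdf (bsD K lam (x * (1 + z))) - stdNormalCdf (bsD K lam x)|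
        ≤ C * x ^ (-(1 / 2) : ℝ) * lam ^ (-(1 / 2) : ℝ) * Real.exp (-lam / 8)
            * varpi0 z := by
  refine ⟨Real.sqrt K, Real.sqrt_pos.mpr hK, fun lam x z hlam hx hz => ?_⟩
  have h1z : 0 < 1 + z := by linarith
  have hxz : 0 < x * (1 + z) := by positivity
  have key : ∀ a b : ℝ, 0 < a → bsD K lam a ≤ bsD K lam b →
      stdNormalCdf (bsD K lam b) - stdNormalCdf (bsD K lam a)
        ≤ Real.sqrt K * a ^ (-(1/2) : ℝ) * lam ^ (-(1/2) : ℝ) * Real.exp (-lam/8) := by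
    intro a b ha hd
    rw [cdf_sub hd]
    calc ∫ s in Set.Ioc (bsD K lam a) (bsD K lam b), stdNormalPdf s
        ≤ ∫ s in Set.Ioi (bsD K lam a), stdNormalPdf s := by
          apply setIntegral_mono_set stdNormalPdf_integrable.integrableOn
            (Filter.Eventually.of_forall fun s => stdNormalPdf_nonneg s)
            (HasSubset.Subset.eventuallyLE Set.Ioc_subset_Ioi_self)
      _ ≤ _ := tail_bound hK hlam ha
  have hP : 0 ≤ Real.sqrt K * x ^ (-(1/2) : ℝ) * lam ^ (-(1/2) : ℝ) * Real.exp (-lam/8) := by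
    positivity
  rcases le_total z 0 with hz0 | hz0
  · -- z ≤ 0 : downward jump
    have hle : x * (1 + z) ≤ x := by nlinarith
    have hd : bsD K lam (x * (1 + z)) ≤ bsD K lam x := bsD_mono hK hlam hxz hle
    rw [abs_sub_comm, abs_of_nonneg (cdf_diff_nonneg hd)]
    have hkey := key (x * (1 + z)) x hxz hd
    have hw : (0:ℝ) ≤ (1 + z) ^ (-(1/2) : ℝ) := Real.rpow_nonneg h1z.le _
    have hsplit : (x * (1 + z)) ^ (-(1/2) : ℝ)
        = x ^ (-(1/2) : ℝ) * (1 + z) ^ (-(1/2) : ℝ) := Real.mul_rpow hx.le h1z.le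
    have hvar : varpi0 z = 1 + (1 + z) ^ (-(1/2) : ℝ) := by
      unfold varpi0; rw [if_pos ⟨hz, hz0⟩]
    calc stdNormalCdf (bsD K lam x) - stdNormalCdf (bsD K lam (x * (1 + z)))
        ≤ Real.sqrt K * (x * (1 + z)) ^ (-(1/2) : ℝ) * lam ^ (-(1/2) : ℝ)
            * Real.exp (-lam/8) := hkey
      _ = (Real.sqrt K * x ^ (-(1/2) : ℝ) * lam ^ (-(1/2) : ℝ) * Real.exp (-lam/8))
            * (1 + z) ^ (-(1/2) : ℝ) := by rw [hsplit]; ring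
      _ ≤ (Real.sqrt K * x ^ (-(1/2) : ℝ) * lam ^ (-(1/2) : ℝ) * Real.exp (-lam/8))
            * varpi0 z := by
          apply mul_le_mul_of_nonneg_left _ hP
          rw [hvar]; linarith
  · -- 0 ≤ z : upward jump
    have hle : x ≤ x * (1 + z) := by nlinarith
    have hd : bsD K lam x ≤ bsD K lam (x * (1 + z)) := bsD_mono hK hlam hx hle
    rw [abs_of_nonneg (cdf_diff_nonneg hd)]
    calc stdNormalCdf (bsD K lam (x * (1 + z))) - stdNormalCdf (bsD K lam x)
        ≤ Real.sqrt K * x ^ (-(1/2) : ℝ) * lam ^ (-(1/2) : ℝ) * Real.exp (-lam/8) :=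
          key x (x * (1 + z)) hx hd
      _ ≤ Real.sqrt K * x ^ (-(1/2) : ℝ) * lam ^ (-(1/2) : ℝ) * Real.exp (-lam/8)
            * varpi0 z := le_mul_of_one_le_right hP (one_le_varpi0 hz)
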